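/- Let 𝒢 = (G, o, R_1, …, R_n) be a functional Menger system of rank n and let H be a nonempty subset of G. Then H is a stabilizer of 𝒢 if and only if H is a quasi-stable l-unitary normal v-complex with R_i H ⊆ H for every i ∈ {1,…,n}, and for all x, y, u ∈ G, w̄ ∈ G^n and i ∈ {1,…,n}: if x = y[R_1x…R_nx] ∈ C_H[H] and u[w̄|_i y] ∈ H, then u[w̄|_i x] ∈ H, and also (the case of the empty outer symbol) if x = y[R_1x…R_nx] ∈ C_H[H] and y ∈ H then x ∈ H. -/

import Mathlib

universe u

/-- A functional Menger system of rank `n`: an `(n+1)`-ary operation `o`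
(written `x[y₁…yₙ]` in the paper) and `n` unary operations `R i`,
satisfying axioms A1–A7. -/
structure MengerSystem (n : ℕ) (G : Type u) where
  o : G → (Fin n → G) → G
  R : Fin n → G → G
  A1 : ∀ (x : G) (y z : Fin n → G),
    o (o x y) z = o x fun i => o (y i) z
  A2 : ∀ x : G, o x (fun i => R i x) = x
  A3 : ∀ (x : G) (u : Fin n → G) (i : Fin n) (z y : G),
    o (o x (Function.update u i z)) (fun j => R j y)
      = o x (Function.update u i (o z fun j => R j y))
  A4 : ∀ (i : Fin n) (x y : G),
    R i (o x fun j => R j y) = o (R i x) fun j => R j y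
  A5 : ∀ (x y z : G),
    o (o x fun j => R j y) (fun j => R j z)
      = o (o x fun j => R j z) (fun j => R j y)
  A6 : ∀ (i k : Fin n) (x : G) (y : Fin n → G),
    R i (o x y) = R i (o (R k x) y)
  A7 : ∀ (i : Fin n) (x : G) (y : Fin n → G),
    o (R i x) y = o (y i) fun j => R j (o x y)

namespace MengerSystem

variable {n : ℕ} {G : Type u}

/-- `T_n(G)`: the least set of transformations of `G` containing the identity and
closed under `t ↦ (x ↦ a[b̄|ᵢ t x])` and `t ↦ (x ↦ Rᵢ (t x))`. -/
inductive IsTn (M : MengerSystem n G) : (G → G) → Prop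
  | id : IsTn M id
  | op (t : G → G) (a : G) (b : Fin n → G) (i : Fin n) :
      IsTn M t → IsTn M fun x => M.o a (Function.update b i (t x))
  | proj (t : G → G) (i : Fin n) :
      IsTn M t → IsTn M fun x => M.R i (t x)

/-- quasi-stable: `x ∈ H → x[x…x] ∈ H`. -/
def QuasiStable (M : MengerSystem n G) (H : Set G) : Prop :=
  ∀ x ∈ H, M.o x (fun _ => x) ∈ H

/-- l-unitary: `x[y…y] ∈ H ∧ y ∈ H → x ∈ H`. -/
def LUnitary (M : MengerSystem n G) (H : Set G) : Prop :=
  ∀ x y : G, M.o x (fun _ => y) ∈ H → y ∈ H → x ∈ H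

/-- normal v-complex: `x, y ∈ H ∧ t x ∈ H → t y ∈ H` for all `t ∈ T_n(G)`. -/
def NormalVComplex (M : MengerSystem n G) (H : Set G) : Prop :=
  ∀ t : G → G, M.IsTn t → ∀ x ∈ H, ∀ y ∈ H, t x ∈ H → t y ∈ H

/-- stable: `x, y₁, …, yₙ ∈ H → x[y₁…yₙ] ∈ H`. -/
def Stable (M : MengerSystem n G) (H : Set G) : Prop :=
  ∀ (x : G) (y : Fin n → G), x ∈ H → (∀ i, y i ∈ H) → M.o x y ∈ H

/-- v-unitary: `x[y₁…yₙ] ∈ H ∧ y₁, …, yₙ ∈ H → x ∈ H`. -/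
def VUnitary (M : MengerSystem n G) (H : Set G) : Prop :=
  ∀ (x : G) (y : Fin n → G), M.o x y ∈ H → (∀ i, y i ∈ H) → x ∈ H

/-- l-ideal: `x[y₁…yₙ] ∈ H` whenever some `yᵢ ∈ H`. -/
def LIdeal (M : MengerSystem n G) (H : Set G) : Prop :=
  ∀ (x : G) (y : Fin n → G), (∃ i, y i ∈ H) → M.o x y ∈ H

/-- the order `x ≤ y ↔ x = y[R₁x…Rₙx]` (the relation ζ). -/
def le (M : MengerSystem n G) (x y : G) : Prop :=
  x = M.o y fun i => M.R i x

/-- the quasi-order `x ⊏ y ↔ R₁x ≤ R₁y` (the relation χ). -/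
def sub (M : MengerSystem n G) [NeZero n] (x y : G) : Prop :=
  M.le (M.R 0 x) (M.R 0 y)

/-- v-regular binary relation. -/
def VRegular (M : MengerSystem n G) (ρ : G → G → Prop) : Prop :=
  ∀ (z : G) (x y : Fin n → G), (∀ i, ρ (x i) (y i)) → ρ (M.o z x) (M.o z y)

end MengerSystem

/-- An `n`-place function on `A`: a partial map from `Aⁿ` to `A`. -/
def NPlace (n : ℕ) (A : Type u) : Type u := (Fin n → A) → Part A

namespace NPlace

variable {n : ℕ} {A : Type u}

/-- Menger composition `f[g₁…gₙ]` of `n`-place functions. -/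
def comp (f : NPlace n A) (g : Fin n → NPlace n A) : NPlace n A :=
  fun a =>
    (⟨∀ i, (g i a).Dom, fun h i => (g i a).get (h i)⟩ : Part (Fin n → A)).bind f

/-- `Rᵢ f`: same domain as `f`, value `(Rᵢ f)(a₁,…,aₙ) = aᵢ`. -/
def Ri (i : Fin n) (f : NPlace n A) : NPlace n A :=
  fun a => (f a).map fun _ => a i

/-- Set-theoretic intersection of two `n`-place functions (as sets of pairs). -/
def inter (f g : NPlace n A) : NPlace n A :=
  fun a => ⟨(f a).Dom ∧ f a = g a, fun h => (f a).get h.1⟩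

end NPlace

/-- A representation of a functional Menger system by `n`-place functions. -/
def MengerSystem.IsRep {n : ℕ} {G : Type u} (M : MengerSystem n G) {A : Type u}
    (P : G → NPlace n A) : Prop :=
  (∀ (x : G) (y : Fin n → G), P (M.o x y) = NPlace.comp (P x) fun i => P (y i)) ∧
  (∀ (i : Fin n) (x : G), P (M.R i x) = NPlace.Ri i (P x))

/-- A nonempty `H ⊆ G` is a stabilizer of `M` if there are a representation `P`
on some set `A` and a point `a ∈ A` with `H = {g | P g (a,…,a) = a}`. -/
def MengerSystem.IsStabilizer {n : ℕ} {G : Type u} (M : MengerSystem n G)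
    (H : Set G) : Prop :=
  ∃ (A : Type u) (P : G → NPlace n A) (a : A),
    M.IsRep P ∧ H = {g : G | a ∈ P g fun _ => a}

/-- The operator `C_H`: `c ∈ C_H(X)` iff there are `a, b, t` with
`(a ≤ b ∨ a, b ∈ H)`, `t a ⊏ c`, `a ∈ X` and `t b ∈ X`. -/
def MengerSystem.CH {n : ℕ} {G : Type u} [NeZero n] (M : MengerSystem n G)
    (H X : Set G) : Set G :=
  {c | ∃ (a b : G) (t : G → G), M.IsTn t ∧ (M.le a b ∨ (a ∈ H ∧ b ∈ H)) ∧
    M.sub (t a) c ∧ a ∈ X ∧ t b ∈ X}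

/-- Iterates `C_H^m(X)`. -/
def MengerSystem.CHiter {n : ℕ} {G : Type u} [NeZero n] (M : MengerSystem n G)
    (H X : Set G) : ℕ → Set G
  | 0 => X
  | m + 1 => M.CH H (M.CHiter H X m)

/-- `C_H[X] = ⋃ₘ C_H^m(X)`. -/
def MengerSystem.CHcl {n : ℕ} {G : Type u} [NeZero n] (M : MengerSystem n G)
    (H X : Set G) : Set G :=
  ⋃ m : ℕ, M.CHiter H X m
namespace MengerSystem

variable {n : ℕ} {G : Type u} (M : MengerSystem n G)

/-- restriction: `x[R₁y…Rₙy]`. -/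
def rb (x y : G) : G := M.o x fun j => M.R j y

lemma rb_self (x : G) : M.rb x x = x := M.A2 x

lemma R_rb (i : Fin n) (x y : G) : M.R i (M.rb x y) = M.rb (M.R i x) y := M.A4 i x y

lemma R_R (i k : Fin n) (x : G) : M.R i (M.R k x) = M.R i x := by
  have h1 := M.A6 i k x (fun j => M.R j x)
  have h2 : M.o (M.R k x) (fun j => M.R j x) = M.R k x := by
    rw [← M.A4, M.A2]
  rw [M.A2, h2] at h1
  exact h1.symm

lemma rb_R (x : G) (k : Fin n) (y : G) : M.rb x (M.R k y) = M.rb x y := by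
  unfold rb
  congr 1
  funext j
  exact M.R_R j k y

lemma rb_comp (x a b : G) : M.rb x (M.rb a b) = M.rb (M.rb x a) b := by
  show M.o x (fun j => M.R j (M.rb a b)) = M.o (M.o x fun j => M.R j a) fun j => M.R j b
  rw [M.A1]
  congr 1
  funext j
  exact M.R_rb j a b

lemma rb_absorb (x y : G) : M.rb (M.rb x y) y = M.rb x y := by
  show M.o (M.o x fun j => M.R j y) (fun j => M.R j y) = _
  rw [M.A1]
  unfold rb
  congr 1
  funext j
  show M.o (M.R j y) (fun l => M.R l y) = M.R j y
  rw [← M.A4, M.A2]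

lemma rb_swap (x y z : G) : M.rb (M.rb x y) z = M.rb (M.rb x z) y := M.A5 x y z

lemma rb_R_self (i : Fin n) (x : G) : M.rb (M.R i x) x = M.R i x := by
  rw [← M.R_rb, M.rb_self]

lemma proj_o (i k : Fin n) (u : G) (v : Fin n → G) :
    M.R i (M.o u v) = M.rb (M.R i (v k)) (M.o u v) := by
  rw [M.A6 i k u v, M.A7 k u v, M.A4]
  rfl

lemma rb_R_swap (i : Fin n) (x y : G) : M.rb (M.R i x) y = M.rb (M.R i y) x := by
  have h1 : M.rb (M.R i x) y = M.rb (M.R i y) (M.rb x y) := M.A7 i x _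
  rw [h1, M.rb_comp, M.rb_swap, M.rb_R_self]

lemma le_refl (x : G) : M.le x x := (M.A2 x).symm

lemma le_rb (x y : G) : M.le (M.rb x y) x := by
  show M.rb x y = M.rb x (M.rb x y)
  rw [M.rb_comp, M.rb_self]

lemma le_trans {x y z : G} (hxy : M.le x y) (hyz : M.le y z) : M.le x z := by
  have hxy : x = M.rb y x := hxy
  have hyz : y = M.rb z y := hyz
  show x = M.rb z x
  calc x = M.rb y x := hxy
  _ = M.rb (M.rb z y) x := by rw [← hyz]
  _ = M.rb z (M.rb y x) := (M.rb_comp z y x).symm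
  _ = M.rb z x := by rw [← hxy]

variable [NeZero n]

lemma sub_iff' {x y : G} : M.sub x y ↔ M.R 0 x = M.rb (M.R 0 y) x := by
  unfold sub le
  rw [show (M.o (M.R 0 y) fun i => M.R i (M.R 0 x)) = M.rb (M.R 0 y) x from M.rb_R _ 0 x]

lemma sub_refl (x : G) : M.sub x x := M.le_refl _

lemma sub_of_R0_eq {x y : G} (h : M.R 0 x = M.R 0 y) : M.sub x y := by
  unfold sub
  rw [h]
  exact M.le_refl _

lemma sub_trans {x y z : G} (h1 : M.sub x y) (h2 : M.sub y z) : M.sub x z :=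
  M.le_trans h1 h2

lemma sub_o_arg (u : G) (v : Fin n → G) (k : Fin n) : M.sub (M.o u v) (v k) := by
  rw [M.sub_iff']
  exact M.proj_o 0 k u v

lemma le_sub {x y : G} (h : M.le x y) : M.sub x y := by
  rw [M.sub_iff']
  nth_rewrite 1 [h]
  exact M.R_rb 0 y x

lemma sub_rb_left (x y : G) : M.sub (M.rb x y) x := by
  rw [M.sub_iff', M.R_rb, M.rb_comp, M.rb_R_self]

lemma sub_rb_right (x y : G) : M.sub (M.rb x y) y := by
  rw [M.sub_iff', M.R_rb, M.rb_comp]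
  conv_rhs => rw [M.rb_R_swap]
  rw [M.rb_absorb, M.rb_R_swap]

end MengerSystem
namespace MengerSystem

variable {n : ℕ} {G : Type u} (M : MengerSystem n G)

lemma IsTn.comp' {M : MengerSystem n G} {t f : G → G} (ht : M.IsTn t) (hf : M.IsTn f) :
    M.IsTn (fun x => t (f x)) := by
  induction ht with
  | id => exact hf
  | op t a b i ht ih => exact IsTn.op _ a b i ih
  | proj t i ht ih => exact IsTn.proj _ i ih

lemma IsTn.restrict {t : G → G} (ht : M.IsTn t) (z w : G) :
    t (M.rb z w) = M.rb (t z) w := by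
  induction ht with
  | id => rfl
  | op t a b i ht ih =>
    show M.o a (Function.update b i (t (M.rb z w))) = M.rb (M.o a (Function.update b i (t z))) w
    rw [ih]
    exact (M.A3 a b i (t z) w).symm
  | proj t i ht ih =>
    show M.R i (t (M.rb z w)) = M.rb (M.R i (t z)) w
    rw [ih]
    exact M.R_rb i (t z) w

variable [NeZero n]

/-- the key term `q(v,w) = v[R₀w, R₁v, …, Rₙv]`. -/
def qr (v w : G) : G := M.o v (Function.update (fun j => M.R j v) 0 (M.R 0 w))

lemma update_R_self (v : G) :
    Function.update (fun j => M.R j v) 0 (M.R 0 v) = fun j => M.R j v :=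
  Function.update_eq_self 0 _

lemma qr_self (v : G) : M.qr v v = v := by
  unfold qr
  rw [M.update_R_self, M.A2]

lemma qr_tn (v : G) : M.IsTn (fun y => M.qr v y) :=
  IsTn.op _ v _ 0 (IsTn.proj _ 0 IsTn.id)

lemma rb_qr (v w : G) : M.rb (M.qr v w) v = M.rb v w := by
  unfold qr rb
  rw [M.A3]
  rw [show (M.o (M.R 0 w) fun j => M.R j v) = M.o (M.R 0 v) fun j => M.R j w from
    M.rb_R_swap 0 w v]
  rw [← M.A3, M.update_R_self, M.A2]

lemma R0_qr (v w : G) : M.R 0 (M.qr v w) = M.R 0 (M.rb v w) := by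
  set u : Fin n → G := Function.update (fun j => M.R j v) 0 (M.R 0 w) with hu
  have hu0 : u 0 = M.R 0 w := Function.update_self 0 _ _
  have hqq : M.qr v w = M.o v u := rfl
  set qq := M.qr v w with hq
  -- each coordinate projection absorbs
  have hcoord : ∀ j, M.R j qq = M.o (u j) (fun l => M.R l qq) := by
    intro j
    have h1 : M.R j qq = M.rb (M.R j (u j)) qq := by
      rw [hqq]; exact M.proj_o j j v u
    have h2 : M.R j (u j) = u j := by
      by_cases hj : j = 0
      · subst hj; rw [hu0]; exact M.R_R 0 0 w
      · have : u j = M.R j v := Function.update_of_ne hj _ _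
        rw [this]; exact M.R_R j j v
    rw [h2] at h1; exact h1
  -- R 0 qq = rb (R 0 w) qq
  have hR0 : M.R 0 qq = M.rb (M.R 0 w) qq := by
    have := M.proj_o 0 0 v u
    rw [← hqq] at this
    rw [this, hu0, M.R_R]
  -- rb (R 0 v) qq = rb (R 0 w) qq
  have hkey : M.rb (M.R 0 v) qq = M.rb (M.R 0 w) qq := by
    have e1 : M.rb (M.R 0 v) qq = M.o (M.o (M.R 0 v) u) (fun l => M.R l qq) := by
      show M.o (M.R 0 v) (fun j => M.R j qq) = _
      rw [M.A1]
      congr 1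
      funext j
      exact hcoord j
    have e2 : M.o (M.R 0 v) u = M.rb (M.R 0 w) qq := by
      rw [M.A7 0 v u, hu0, hqq]
      rfl
    rw [e1, e2]
    show M.rb (M.rb (M.R 0 w) qq) qq = _
    rw [M.rb_absorb]
  calc M.R 0 qq = M.rb (M.R 0 w) qq := hR0
  _ = M.rb (M.R 0 v) qq := hkey.symm
  _ = M.rb (M.R 0 (M.qr v w)) v := by rw [← hq, ← M.rb_R_swap]
  _ = M.R 0 (M.rb (M.qr v w) v) := (M.R_rb 0 _ v).symm
  _ = M.R 0 (M.rb v w) := by rw [M.rb_qr]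

omit [NeZero n] in
lemma le_rb_mono {a b : G} (z : G) (h : M.le a b) : M.le (M.rb z a) (M.rb z b) := by
  have h : a = M.rb b a := h
  show M.rb z a = M.rb (M.rb z b) (M.rb z a)
  calc M.rb z a = M.rb z (M.rb b a) := by rw [← h]
  _ = M.rb (M.rb z b) a := M.rb_comp z b a
  _ = M.rb (M.rb (M.rb z b) z) a := by
        rw [show M.rb (M.rb z b) z = M.rb (M.rb z z) b from M.rb_swap z b z, M.rb_self]
  _ = M.rb (M.rb z b) (M.rb z a) := by rw [← M.rb_comp]

lemma qr_mono {p w : G} (v : G) (h : M.sub p w) : M.sub (M.qr v p) (M.qr v w) := by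
  have h : M.le (M.R 0 p) (M.R 0 w) := h
  show M.le (M.R 0 (M.qr v p)) (M.R 0 (M.qr v w))
  rw [M.R0_qr, M.R0_qr, M.R_rb, M.R_rb, ← M.rb_R _ 0 p, ← M.rb_R _ 0 w]
  exact M.le_rb_mono _ h

lemma sub_qr_rb (v w : G) : M.sub (M.qr v w) (M.rb v w) :=
  M.sub_of_R0_eq (M.R0_qr v w)

lemma sub_rb_qr (v w : G) : M.sub (M.rb v w) (M.qr v w) :=
  M.sub_of_R0_eq (M.R0_qr v w).symm

lemma R0_rb_comm (v w : G) : M.R 0 (M.rb v w) = M.R 0 (M.rb w v) := by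
  rw [M.R_rb, M.R_rb, M.rb_R_swap]

end MengerSystem
namespace MengerSystem

variable {n : ℕ} {G : Type u} [NeZero n] (M : MengerSystem n G) (H : Set G)

lemma subset_CH (X : Set G) : X ⊆ M.CH H X := fun c hc =>
  ⟨c, c, id, IsTn.id, Or.inl (M.le_refl c), M.sub_refl c, hc, hc⟩

lemma CH_mono {X Y : Set G} (h : X ⊆ Y) : M.CH H X ⊆ M.CH H Y := by
  rintro c ⟨a, b, t, ht, hab, hs, ha, hb⟩
  exact ⟨a, b, t, ht, hab, hs, h ha, h hb⟩

lemma CHiter_mono {m m' : ℕ} (h : m ≤ m') : M.CHiter H H m ⊆ M.CHiter H H m' := by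
  induction m' with
  | zero => rw [Nat.le_zero] at h; subst h; exact subset_rfl
  | succ k ih =>
    rcases Nat.lt_or_ge m (k+1) with h' | h'
    · exact (ih (Nat.lt_succ_iff.mp h')).trans (M.subset_CH H _)
    · have : m = k + 1 := Nat.le_antisymm h h'
      subst this; exact subset_rfl

lemma H_subset_W : H ⊆ M.CHcl H H := fun _ hx =>
  Set.mem_iUnion.mpr ⟨0, hx⟩

lemma W_intro {α β c : G} {τ : G → G} (hτ : M.IsTn τ)
    (hab : M.le α β ∨ (α ∈ H ∧ β ∈ H)) (hs : M.sub (τ α) c)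
    (hα : α ∈ M.CHcl H H) (hβ : τ β ∈ M.CHcl H H) : c ∈ M.CHcl H H := by
  obtain ⟨m₁, h₁⟩ := Set.mem_iUnion.mp hα
  obtain ⟨m₂, h₂⟩ := Set.mem_iUnion.mp hβ
  refine Set.mem_iUnion.mpr ⟨(max m₁ m₂) + 1, ⟨α, β, τ, hτ, hab, hs, ?_, ?_⟩⟩
  · exact M.CHiter_mono H (le_max_left m₁ m₂) h₁
  · exact M.CHiter_mono H (le_max_right m₁ m₂) h₂

lemma W_upward {x y : G} (hx : x ∈ M.CHcl H H) (h : M.sub x y) : y ∈ M.CHcl H H :=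
  M.W_intro H IsTn.id (Or.inl (M.le_refl x)) h hx hx

/-- `q(v,w) ∈ W` when `v ∈ H` and `w ∈ CHiter m`. -/
lemma qr_W_of_H {v : G} (hv : v ∈ H) : ∀ m, ∀ w ∈ M.CHiter H H m,
    M.qr v w ∈ M.CHcl H H := by
  intro m
  induction m with
  | zero =>
    intro w hw
    refine M.W_intro H (M.qr_tn v) (Or.inr ⟨hw, hv⟩) (M.sub_refl _) (M.H_subset_W H hw) ?_
    show M.qr v v ∈ M.CHcl H H
    rw [M.qr_self v]
    exact M.H_subset_W H hv
  | succ m ih =>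
    rintro w ⟨α, β, τ, hτ, hab, hs, hα, hβ⟩
    refine M.W_intro H (IsTn.comp' (M.qr_tn v) hτ) hab ?_ ?_ ?_
    · exact M.qr_mono v hs
    · exact Set.mem_iUnion.mpr ⟨m, hα⟩
    · exact ih (τ β) hβ

lemma rb_W {v w : G} (hv : v ∈ M.CHcl H H) (hw : w ∈ M.CHcl H H) :
    M.rb v w ∈ M.CHcl H H := by
  -- first: the case v ∈ H is qr_W_of_H; general case by induction on the level of w
  obtain ⟨m, hm⟩ := Set.mem_iUnion.mp hw
  clear hw
  induction m generalizing w with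
  | zero =>
    -- w ∈ H : use symmetry through rb w v and qr w v
    have h1 : M.qr w v ∈ M.CHcl H H := by
      obtain ⟨k, hk⟩ := Set.mem_iUnion.mp hv
      exact M.qr_W_of_H H hm k v hk
    have h2 : M.rb w v ∈ M.CHcl H H := M.W_upward H h1 (M.sub_qr_rb w v)
    exact M.W_upward H h2 (M.sub_of_R0_eq (M.R0_rb_comm w v))
  | succ m ih =>
    obtain ⟨α, β, τ, hτ, hab, hs, hα, hβ⟩ := hm
    have hq : M.qr v w ∈ M.CHcl H H := by
      refine M.W_intro H (IsTn.comp' (M.qr_tn v) hτ) hab ?_ ?_ ?_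
      · exact M.qr_mono v hs
      · exact Set.mem_iUnion.mpr ⟨m, hα⟩
      · have := ih hβ
        exact M.W_upward H this (M.sub_rb_qr v (τ β))
    exact M.W_upward H hq (M.sub_qr_rb v w)

end MengerSystem
namespace MengerSystem

variable {n : ℕ} {G : Type u} [NeZero n] (M : MengerSystem n G) (H : Set G)

/-- the equivalence used to build the quotient model. -/
def eqv (x y : G) : Prop :=
  ∀ t : G → G, M.IsTn t →
    ((t x ∈ H ↔ t y ∈ H) ∧ (t x ∈ M.CHcl H H ↔ t y ∈ M.CHcl H H))

lemma eqv_refl (x : G) : M.eqv H x x := fun _ _ => ⟨Iff.rfl, Iff.rfl⟩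

lemma eqv_symm {x y : G} (h : M.eqv H x y) : M.eqv H y x := fun t ht =>
  ⟨(h t ht).1.symm, (h t ht).2.symm⟩

lemma eqv_trans {x y z : G} (h1 : M.eqv H x y) (h2 : M.eqv H y z) : M.eqv H x z :=
  fun t ht => ⟨(h1 t ht).1.trans (h2 t ht).1, (h1 t ht).2.trans (h2 t ht).2⟩

lemma eqv_comp {x y : G} {f : G → G} (hf : M.IsTn f) (h : M.eqv H x y) :
    M.eqv H (f x) (f y) := fun t ht => h (fun z => t (f z)) (IsTn.comp' ht hf)

lemma eqv_mem_H {x y : G} (h : M.eqv H x y) (hx : x ∈ H) : y ∈ H :=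
  (h id IsTn.id).1.mp hx

lemma eqv_mem_W {x y : G} (h : M.eqv H x y) (hx : x ∈ M.CHcl H H) : y ∈ M.CHcl H H :=
  (h id IsTn.id).2.mp hx

lemma eqv_of_H (hn : M.NormalVComplex H) {x y : G} (hx : x ∈ H) (hy : y ∈ H) :
    M.eqv H x y := by
  intro t ht
  constructor
  · exact ⟨fun h => hn t ht x hx y hy h, fun h => hn t ht y hy x hx h⟩
  · constructor
    · intro h
      exact M.W_intro H ht (Or.inr ⟨hy, hx⟩) (M.sub_refl _) (M.H_subset_W H hy) h
    · intro h
      exact M.W_intro H ht (Or.inr ⟨hx, hy⟩) (M.sub_refl _) (M.H_subset_W H hx) h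

/-- coordinatewise congruence of `eqv` under the Menger operation. -/
lemma eqv_o_congr {c c' : Fin n → G} (g : G) (h : ∀ i, M.eqv H (c i) (c' i)) :
    M.eqv H (M.o g c) (M.o g c') := by
  have key : ∀ s : Finset (Fin n),
      M.eqv H (M.o g (fun j => if j ∈ s then c' j else c j)) (M.o g c) := by
    intro s
    induction s using Finset.induction with
    | empty => simpa using M.eqv_refl H (M.o g c)
    | @insert i s hi ih =>
      set d : Fin n → G := fun j => if j ∈ s then c' j else c j with hd
      have e1 : (fun j => if j ∈ insert i s then c' j else c j)
          = Function.update d i (c' i) := by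
        funext j
        by_cases hj : j = i
        · subst hj; simp [Function.update_self, hd]
        · simp [Function.update_of_ne hj, Finset.mem_insert, hj, hd]
      have e2 : d = Function.update d i (c i) := by
        funext j
        by_cases hj : j = i
        · subst hj; simp [Function.update_self, hd, hi]
        · simp [Function.update_of_ne hj]
      have hstep : M.eqv H (M.o g (Function.update d i (c' i)))
          (M.o g (Function.update d i (c i))) :=
        M.eqv_comp H (IsTn.op _ g d i IsTn.id) (M.eqv_symm H (h i))
      rw [e1]
      refine M.eqv_trans H hstep ?_
      rw [← e2]
      exact ih
  have h2 := M.eqv_symm H (key Finset.univ)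
  rw [show (fun j => if j ∈ Finset.univ then c' j else c j) = c' by
    funext j; simp] at h2
  exact h2

/-- `x ≤ v` and `x ∈ H` imply `v ∈ H`. -/
lemma le_mem_H (hl : M.LUnitary H) (hn : M.NormalVComplex H)
    (hr : ∀ i : Fin n, ∀ x ∈ H, M.R i x ∈ H)
    {x v : G} (hle : M.le x v) (hx : x ∈ H) : v ∈ H := by
  have hx' : M.o v (fun j => M.R j x) ∈ H := by
    have : x = M.o v fun j => M.R j x := hle
    rwa [← this]
  have hcong : M.eqv H (M.o v (fun j => M.R j x)) (M.o v (fun _ => x)) := by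
    refine M.eqv_o_congr H v fun i => ?_
    exact M.eqv_of_H H hn (hr i x hx) hx
  exact hl v x (M.eqv_mem_H H hcong hx') hx

/-- the key well-definedness fact for values of the canonical representation. -/
lemma value_eqv (hl : M.LUnitary H) (hn : M.NormalVComplex H)
    (hr : ∀ i : Fin n, ∀ x ∈ H, M.R i x ∈ H)
    (h6 : ∀ x y : G, x = M.o y (fun j => M.R j x) → x ∈ M.CHcl H H → y ∈ H → x ∈ H)
    {z w : G} (hw : w ∈ M.CHcl H H) : M.eqv H (M.rb z w) z := by
  intro t ht
  rw [IsTn.restrict M ht z w]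
  set v := t z with hv
  set x := M.rb v w with hx
  have hlex : M.le x v := M.le_rb v w
  have hsubxv : M.sub x v := M.le_sub hlex
  constructor
  · constructor
    · intro h
      exact M.le_mem_H H hl hn hr hlex h
    · intro h
      refine h6 x v hlex ?_ h
      exact M.rb_W H (M.H_subset_W H h) hw
  · constructor
    · intro h
      exact M.W_upward H h hsubxv
    · intro h
      exact M.rb_W H h hw

end MengerSystem
namespace NPlace

variable {n : ℕ} {A : Type u}

lemma mem_comp {f : NPlace n A} {g : Fin n → NPlace n A} {x : Fin n → A} {b : A} :
    b ∈ comp f g x ↔ ∃ v : Fin n → A, (∀ i, v i ∈ g i x) ∧ b ∈ f v := by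
  unfold comp
  refine Part.mem_bind_iff.trans ?_
  constructor
  · rintro ⟨v, hv, hb⟩
    obtain ⟨hdom, hget⟩ := Part.mem_mk_iff.mp hv
    refine ⟨v, fun i => ?_, hb⟩
    rw [← hget]
    exact Part.get_mem (hdom i)
  · rintro ⟨v, hv, hb⟩
    refine ⟨v, Part.mem_mk_iff.mpr ⟨fun i => Part.dom_iff_mem.mpr ⟨v i, hv i⟩, ?_⟩, hb⟩
    funext i
    exact Part.get_eq_of_mem (hv i) _

lemma mem_Ri {i : Fin n} {f : NPlace n A} {x : Fin n → A} {b : A} :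
    b ∈ Ri i f x ↔ (f x).Dom ∧ b = x i := by
  unfold Ri
  rw [Part.mem_map_iff]
  constructor
  · rintro ⟨c, hc, rfl⟩
    exact ⟨Part.dom_iff_mem.mpr ⟨c, hc⟩, rfl⟩
  · rintro ⟨h, rfl⟩
    exact ⟨(f x).get h, Part.get_mem h, rfl⟩

end NPlace
namespace MengerSystem

variable {n : ℕ} {G : Type u} [NeZero n]

theorem stab_necessity (M : MengerSystem n G) (H : Set G) (hs : M.IsStabilizer H) :
    M.QuasiStable H ∧ M.LUnitary H ∧ M.NormalVComplex H ∧
      (∀ i : Fin n, ∀ x ∈ H, M.R i x ∈ H) ∧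
      (∀ (x y u : G) (w : Fin n → G) (i : Fin n),
        x = M.o y (fun j => M.R j x) → x ∈ M.CHcl H H →
        M.o u (Function.update w i y) ∈ H →
        M.o u (Function.update w i x) ∈ H) ∧
      (∀ x y : G, x = M.o y (fun j => M.R j x) → x ∈ M.CHcl H H →
        y ∈ H → x ∈ H) := by
  obtain ⟨A, P, a, ⟨hco, hRi⟩, hHs⟩ := hs
  set aa : Fin n → A := fun _ => a with haa
  have hmem : ∀ g, g ∈ H ↔ a ∈ P g aa := by
    intro g; rw [hHs]; exact Iff.rfl
  have hRdom : ∀ (x : G) (i : Fin n), (P (M.R i x) aa).Dom ↔ (P x aa).Dom := by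
    intro x i
    rw [hRi]
    exact Iff.rfl
  have N2' : ∀ (x : G) (c : Fin n → G), (∀ i, P (c i) aa = Part.some a) →
      P (M.o x c) aa = P x aa := by
    intro x c hc
    rw [hco]
    apply Part.ext; intro b
    rw [NPlace.mem_comp]
    constructor
    · rintro ⟨v, hv, hb⟩
      have hva : v = aa := funext fun i => by
        have h := hv i
        rw [hc i] at h
        exact Part.mem_some_iff.mp h
      rwa [hva] at hb
    · intro hb
      exact ⟨aa, fun i => by rw [hc i]; exact Part.mem_some _, hb⟩
  have N_eq : ∀ x y : G, M.le x y → (P x aa).Dom → P x aa = P y aa := by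
    intro x y hxy hd
    have hx : P x aa = P (M.o y fun j => M.R j x) aa := by rw [← hxy]
    rw [hx, hco]
    apply Part.ext; intro b
    rw [NPlace.mem_comp]
    constructor
    · rintro ⟨v, hv, hb⟩
      have hva : v = aa := funext fun i => by
        have h := hv i
        rw [hRi] at h
        exact (NPlace.mem_Ri.mp h).2
      rwa [hva] at hb
    · intro hb
      refine ⟨aa, fun i => ?_, hb⟩
      rw [hRi]
      exact NPlace.mem_Ri.mpr ⟨hd, rfl⟩
  have Peq_o : ∀ (u : G) (c c' : Fin n → G), (∀ j, P (c j) aa = P (c' j) aa) →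
      P (M.o u c) aa = P (M.o u c') aa := by
    intro u c c' h
    rw [hco, hco]
    apply Part.ext; intro b
    rw [NPlace.mem_comp, NPlace.mem_comp]
    constructor
    · rintro ⟨v, hv, hb⟩
      exact ⟨v, fun i => (h i) ▸ hv i, hb⟩
    · rintro ⟨v, hv, hb⟩
      exact ⟨v, fun i => (h i).symm ▸ hv i, hb⟩
  have N6 : ∀ x y : G, P x aa = P y aa → ∀ t, M.IsTn t → P (t x) aa = P (t y) aa := by
    intro x y hxy t ht
    induction ht with
    | id => exact hxy
    | op t c b i ht ih =>
      refine Peq_o c _ _ fun j => ?_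
      by_cases hj : j = i
      · subst hj; rw [Function.update_self, Function.update_self]; exact ih
      · rw [Function.update_of_ne hj, Function.update_of_ne hj]
    | proj t i ht ih =>
      show P (M.R i (t x)) aa = P (M.R i (t y)) aa
      rw [hRi, hRi]
      unfold NPlace.Ri
      rw [ih]
  have N5 : ∀ x y : G, M.sub x y → (P x aa).Dom → (P y aa).Dom := by
    intro x y h hd
    have h0 : (P (M.R 0 x) aa).Dom := (hRdom x 0).mpr hd
    have heq := N_eq _ _ h h0
    exact (hRdom y 0).mp (heq ▸ h0)
  have N7' : ∀ m : ℕ, ∀ c ∈ M.CHiter H H m, (P c aa).Dom := by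
    intro m
    induction m with
    | zero => exact fun c hm => Part.dom_iff_mem.mpr ⟨a, (hmem c).mp hm⟩
    | succ m ih =>
      intro c hm
      obtain ⟨α, β, τ, hτ, hor, hsub, hα, hβ⟩ := hm
      have hαd : (P α aa).Dom := ih α hα
      have hβd : (P (τ β) aa).Dom := ih (τ β) hβ
      -- continue below
      have hab : P α aa = P β aa := by
        rcases hor with h | ⟨h1, h2⟩
        · exact N_eq _ _ h hαd
        · rw [Part.eq_some_iff.mpr ((hmem α).mp h1), Part.eq_some_iff.mpr ((hmem β).mp h2)]
      have hτab := N6 _ _ hab τ hτ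
      exact N5 _ _ hsub (hτab ▸ hβd)
  have N7 : ∀ c ∈ M.CHcl H H, (P c aa).Dom := by
    intro c hc
    obtain ⟨m, hm⟩ := Set.mem_iUnion.mp hc
    exact N7' m c hm
  refine ⟨?_, ?_, ?_, ?_, ?_, ?_⟩
  · -- quasi-stable
    intro g hg
    rw [hmem]
    rw [N2' g (fun _ => g) (fun _ => Part.eq_some_iff.mpr ((hmem g).mp hg))]
    exact (hmem g).mp hg
  · -- l-unitary
    intro x y hxy hy
    rw [hmem]
    rw [← N2' x (fun _ => y) (fun _ => Part.eq_some_iff.mpr ((hmem y).mp hy))]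
    exact (hmem _).mp hxy
  · -- normal v-complex
    intro t ht x hx y hy htx
    rw [hmem]
    have hxy : P x aa = P y aa := by
      rw [Part.eq_some_iff.mpr ((hmem x).mp hx), Part.eq_some_iff.mpr ((hmem y).mp hy)]
    rw [← N6 _ _ hxy t ht]
    exact (hmem _).mp htx
  · -- R i H ⊆ H
    intro i x hx
    rw [hmem, hRi]
    exact NPlace.mem_Ri.mpr ⟨Part.dom_iff_mem.mpr ⟨a, (hmem x).mp hx⟩, rfl⟩
  · -- condition (f-22)
    intro x y u w i hle hx hu
    have hd : (P x aa).Dom := N7 x hx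
    have hxy : P x aa = P y aa := N_eq _ _ hle hd
    rw [hmem]
    rw [Peq_o u (Function.update w i x) (Function.update w i y) fun j => by
      by_cases hj : j = i
      · subst hj; rw [Function.update_self, Function.update_self]; exact hxy
      · rw [Function.update_of_ne hj, Function.update_of_ne hj]]
    exact (hmem _).mp hu
  · -- empty outer symbol case
    intro x y hle hx hy
    have hd : (P x aa).Dom := N7 x hx
    have hxy : P x aa = P y aa := N_eq _ _ hle hd
    rw [hmem, hxy]
    exact (hmem y).mp hy

end MengerSystem
namespace MengerSystem

variable {n : ℕ} {G : Type u} [NeZero n]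

/-- the setoid of the canonical model. -/
def eqvSetoid (M : MengerSystem n G) (H : Set G) : Setoid G :=
  ⟨M.eqv H, ⟨M.eqv_refl H, fun h => M.eqv_symm H h, fun h1 h2 => M.eqv_trans H h1 h2⟩⟩

/-- the carrier of the canonical model. -/
def stabModel (M : MengerSystem n G) (H : Set G) : Type u := Quotient (M.eqvSetoid H)

/-- the canonical representation. -/
noncomputable def stabP (M : MengerSystem n G) (H : Set G) : G → NPlace n (M.stabModel H) :=
  fun g x =>
    ⟨M.o g (fun i => (x i).out) ∈ M.CHcl H H,
      fun _ => Quotient.mk (M.eqvSetoid H) (M.o g (fun i => (x i).out))⟩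

lemma stabP_mem {M : MengerSystem n G} {H : Set G} {g : G} {x : Fin n → M.stabModel H}
    {b : M.stabModel H} :
    b ∈ M.stabP H g x ↔ ∃ _ : (M.o g (fun i => (x i).out) ∈ M.CHcl H H),
      Quotient.mk (M.eqvSetoid H) (M.o g (fun i => (x i).out)) = b :=
  Part.mem_mk_iff

lemma eqv_sound {M : MengerSystem n G} {H : Set G} {a b : G} (h : M.eqv H a b) :
    Quotient.mk (M.eqvSetoid H) a = Quotient.mk (M.eqvSetoid H) b :=
  Quot.sound h

lemma eqv_exact {M : MengerSystem n G} {H : Set G} {a b : G}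
    (h : Quotient.mk (M.eqvSetoid H) a = Quotient.mk (M.eqvSetoid H) b) :
    M.eqv H a b :=
  Quotient.exact h

lemma out_eqv (M : MengerSystem n G) (H : Set G) (c : G) :
    M.eqv H ((Quotient.mk (M.eqvSetoid H) c).out) c :=
  eqv_exact (Quotient.out_eq _)

lemma R0_Ri_o (M : MengerSystem n G) (i : Fin n) (g : G) (z : Fin n → G) :
    M.R 0 (M.o (M.R i g) z) = M.R 0 (M.o g z) := by
  rw [M.A7 i g z]
  rw [show (M.o (z i) fun j => M.R j (M.o g z)) = M.rb (z i) (M.o g z) from rfl]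
  rw [M.R_rb]
  exact (M.proj_o 0 i g z).symm

theorem stab_sufficiency (M : MengerSystem n G) (H : Set G) (hH : H.Nonempty)
    (hq : M.QuasiStable H) (hl : M.LUnitary H) (hn : M.NormalVComplex H)
    (hr : ∀ i : Fin n, ∀ x ∈ H, M.R i x ∈ H)
    (h6 : ∀ x y : G, x = M.o y (fun j => M.R j x) → x ∈ M.CHcl H H → y ∈ H → x ∈ H) :
    M.IsStabilizer H := by
  obtain ⟨h₀, hh₀⟩ := hH
  refine ⟨M.stabModel H, M.stabP H, Quotient.mk (M.eqvSetoid H) h₀, ⟨?_, ?_⟩, ?_⟩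
  · -- composition axiom
    intro g ys
    funext xx
    set z : Fin n → G := fun i => (xx i).out with hz
    apply Part.ext
    intro b
    rw [stabP_mem, NPlace.mem_comp]
    have hA1 : M.o (M.o g ys) z = M.o g (fun i => M.o (ys i) z) := M.A1 g ys z
    constructor
    · rintro ⟨hD, rfl⟩
      have hD' : M.o g (fun i => M.o (ys i) z) ∈ M.CHcl H H := hA1 ▸ hD
      have hEi : ∀ i, M.o (ys i) z ∈ M.CHcl H H := fun i =>
        M.W_upward H hD' (M.sub_o_arg g _ i)
      refine ⟨fun i => Quotient.mk (M.eqvSetoid H) (M.o (ys i) z), fun i => ?_, ?_⟩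
      · exact stabP_mem.mpr ⟨hEi i, rfl⟩
      · have ecv : M.eqv H
            (M.o g (fun i => (Quotient.mk (M.eqvSetoid H) (M.o (ys i) z)).out))
            (M.o g (fun i => M.o (ys i) z)) :=
          M.eqv_o_congr H g fun i => M.out_eqv H _
        refine stabP_mem.mpr ⟨M.eqv_mem_W H (M.eqv_symm H ecv) hD', ?_⟩
        rw [hA1]
        exact eqv_sound ecv
    · rintro ⟨v, hv, hb⟩
      obtain ⟨hd, hbv⟩ := stabP_mem.mp hb
      have hvi : ∀ i, M.eqv H ((v i).out) (M.o (ys i) z) := by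
        intro i
        obtain ⟨hi, hqi⟩ := stabP_mem.mp (hv i)
        have : (Quotient.mk (M.eqvSetoid H) (M.o (ys i) z)).out = (v i).out := by
          rw [hqi]
        rw [← this]
        exact M.out_eqv H _
      have ecv : M.eqv H (M.o g (fun i => (v i).out))
          (M.o g (fun i => M.o (ys i) z)) := M.eqv_o_congr H g hvi
      refine ⟨?_, ?_⟩
      · rw [hA1]
        exact M.eqv_mem_W H ecv hd
      · rw [← hbv, hA1]
        exact eqv_sound (M.eqv_symm H ecv)
  · -- projection axiom
    intro i g
    funext xx
    set z : Fin n → G := fun i => (xx i).out with hz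
    apply Part.ext
    intro b
    rw [stabP_mem, NPlace.mem_Ri]
    have hR0 := M.R0_Ri_o i g z
    have hdom : (M.o (M.R i g) z ∈ M.CHcl H H) ↔ (M.o g z ∈ M.CHcl H H) := by
      constructor
      · exact fun h => M.W_upward H h (M.sub_of_R0_eq hR0)
      · exact fun h => M.W_upward H h (M.sub_of_R0_eq hR0.symm)
    have hA7 : M.o (M.R i g) z = M.rb (z i) (M.o g z) := M.A7 i g z
    constructor
    · rintro ⟨hD, rfl⟩
      have hw : M.o g z ∈ M.CHcl H H := hdom.mp hD
      refine ⟨hw, ?_⟩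
      have ecv : M.eqv H (M.rb (z i) (M.o g z)) (z i) := M.value_eqv H hl hn hr h6 hw
      have hzo : Quotient.mk (M.eqvSetoid H) (z i) = xx i := Quotient.out_eq (xx i)
      rw [hA7, ← hzo]
      exact eqv_sound ecv
    · rintro ⟨hw, rfl⟩
      refine ⟨hdom.mpr hw, ?_⟩
      have ecv : M.eqv H (M.rb (z i) (M.o g z)) (z i) := M.value_eqv H hl hn hr h6 hw
      have hzo : Quotient.mk (M.eqvSetoid H) (z i) = xx i := Quotient.out_eq (xx i)
      rw [hA7, ← hzo]
      exact eqv_sound ecv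
  · -- the stabilizer is H
    apply Set.ext
    intro g
    set k₀ : G := (Quotient.mk (M.eqvSetoid H) h₀ : M.stabModel H).out with hk
    have hk₀ : M.eqv H k₀ h₀ := M.out_eqv H h₀
    have hk₀H : k₀ ∈ H := M.eqv_mem_H H (M.eqv_symm H hk₀) hh₀
    constructor
    · intro hg
      have hgg : M.o g (fun _ => g) ∈ H := hq g hg
      have ecv : M.eqv H (M.o g (fun _ => g)) (M.o g (fun _ => k₀)) :=
        M.eqv_o_congr H g fun i => M.eqv_of_H H hn hg hk₀H
      have hin : M.o g (fun _ => k₀) ∈ H := M.eqv_mem_H H ecv hgg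
      refine stabP_mem.mpr ⟨?_, ?_⟩
      · exact M.H_subset_W H hin
      · exact eqv_sound (M.eqv_of_H H hn hin hh₀)
    · intro hg
      obtain ⟨hdom, hval⟩ := stabP_mem.mp hg
      have h2 : M.eqv H (M.o g (fun _ => k₀)) h₀ := eqv_exact hval
      have : M.o g (fun _ => k₀) ∈ H :=
        M.eqv_mem_H H (M.eqv_symm H h2) hh₀
      exact hl g k₀ this hk₀H

end MengerSystem
/-- **Theorem 2.** A nonempty `H ⊆ G` is a stabilizer of a functional Menger
system of rank `n` iff it is a quasi-stable l-unitary normal v-complex with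
`Rᵢ H ⊆ H` satisfying condition (f-22) with `C_H[H]` (including the case with
empty outer symbol). -/
theorem stabilizer_iff_CHcl {n : ℕ} {G : Type u} [NeZero n] (M : MengerSystem n G)
    (H : Set G) (hH : H.Nonempty) :
    M.IsStabilizer H ↔
      (M.QuasiStable H ∧ M.LUnitary H ∧ M.NormalVComplex H ∧
        (∀ i : Fin n, ∀ x ∈ H, M.R i x ∈ H) ∧
        (∀ (x y u : G) (w : Fin n → G) (i : Fin n),
          x = M.o y (fun j => M.R j x) → x ∈ M.CHcl H H →
          M.o u (Function.update w i y) ∈ H →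
          M.o u (Function.update w i x) ∈ H) ∧
        (∀ x y : G, x = M.o y (fun j => M.R j x) → x ∈ M.CHcl H H →
          y ∈ H → x ∈ H)) := by
  constructor
  · exact fun hs => MengerSystem.stab_necessity M H hs
  · rintro ⟨hq, hl, hn, hr, _h5, h6⟩
    exact MengerSystem.stab_sufficiency M H hH hq hl hn hr h6
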